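/- Let k, n be positive integers and let [−k,k]K_n be the gain graph on n vertices with one edge of gain i between each pair of vertices for each i ∈ {−k, …, −1, 0, 1, …, k}. Taking gains modulo N for any integer N > nk, the number of zero-free proper colorings c : {1,…,n} → ℤ_N (colorings such that for all i ≠ j, c(i) − c(j) is not congruent to any element of {−k,…,k} mod N) equals N·(N − nk − 1)·(N − nk − 2)⋯(N − nk − n + 1) = N·(N−nk−1)_{n−1}. -/

import Mathlib

open Finset

namespace Stmt14

/-- rank of index `i`: number of indices with smaller value -/
def rk {m : ℕ} (y : Fin m → ℤ) (i : Fin m) : ℕ :=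
  (Finset.univ.filter (fun t => y t < y i)).card

lemma rk_lt_rk {m : ℕ} {y : Fin m → ℤ} (hinj : Function.Injective y)
    {i j : Fin m} (hij : y i < y j) : rk y i < rk y j := by
  apply Finset.card_lt_card
  rw [Finset.ssubset_iff_of_subset]
  · exact ⟨i, by simp [hij], by simp⟩
  · intro t ht
    simp only [mem_filter, mem_univ, true_and] at *
    omega

lemma rk_le {m : ℕ} (y : Fin m → ℤ) (i : Fin m) : rk y i ≤ m - 1 := by
  have h1 : (Finset.univ.filter (fun t => y t < y i)) ⊆ Finset.univ.erase i := by
    intro t ht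
    simp only [mem_filter, mem_univ, true_and] at ht
    simp only [mem_erase, mem_univ, and_true]
    intro h; rw [h] at ht; omega
  have := Finset.card_le_card h1
  simpa [rk, Finset.card_erase_of_mem] using this

lemma rk_congr {m : ℕ} {a b : Fin m → ℤ} (hinj : Function.Injective a)
    (hmono : ∀ i j, a i < a j → b i < b j) (i : Fin m) : rk b i = rk a i := by
  unfold rk
  congr 1
  apply Finset.filter_congr
  intro t _
  constructor
  · intro hb
    rcases lt_trichotomy (a t) (a i) with h | h | h
    · exact h
    · exact absurd (hinj h ▸ hb) (lt_irrefl _)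
    · exact absurd (hmono _ _ h) (by omega)
  · exact hmono t i

lemma y_inj {k : ℤ} (hk : 0 ≤ k) {m : ℕ} {y : Fin m → ℤ}
    (hgap : ∀ i j, i ≠ j → k < |y i - y j|) : Function.Injective y := by
  intro i j hij
  by_contra h
  have h2 := hgap i j h
  rw [hij, sub_self, abs_zero] at h2
  omega

lemma chain {k : ℤ} (hk : 0 ≤ k) {m : ℕ} {y : Fin m → ℤ}
    (hgap : ∀ i j, i ≠ j → k < |y i - y j|) :
    ∀ (M : ℕ) (i j : Fin m), y i < y j → rk y j ≤ M →
      y i + (k + 1) * ((rk y j : ℤ) - (rk y i : ℤ)) ≤ y j := by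
  intro M
  induction M with
  | zero =>
      intro i j hij hM
      have := rk_lt_rk (y_inj hk hgap) hij
      omega
  | succ M ih =>
      intro i j hij hM
      rcases (Finset.univ.filter (fun t => y i < y t ∧ y t < y j)).eq_empty_or_nonempty with
        hBe | hBne
      · have hne : i ≠ j := fun h => absurd (h ▸ hij) (lt_irrefl _)
        have hgap' := hgap i j hne
        have habs : |y i - y j| = y j - y i := by rw [abs_sub_comm]; exact abs_of_pos (by omega)
        rw [habs] at hgap'
        have hcard : rk y j = rk y i + 1 := by
          have hset : Finset.univ.filter (fun t => y t < y j)
              = insert i (Finset.univ.filter (fun t => y t < y i)) := by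
            ext t
            simp only [mem_insert, mem_filter, mem_univ, true_and]
            constructor
            · intro ht
              rcases lt_trichotomy (y t) (y i) with h | h | h
              · exact Or.inr h
              · exact Or.inl (y_inj hk hgap h)
              · exfalso
                have : t ∈ Finset.univ.filter (fun t => y i < y t ∧ y t < y j) := by
                  simp [h, ht]
                rw [hBe] at this; simp at this
            · rintro (rfl | ht)
              · exact hij
              · exact lt_trans ht hij
          rw [rk, rk, hset, Finset.card_insert_of_notMem (by simp)]
        rw [hcard]
        push_cast
        nlinarith
      · obtain ⟨t, htB, htmax⟩ := Finset.exists_max_image _ y hBne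
        simp only [mem_filter, mem_univ, true_and] at htB
        obtain ⟨hit, htj⟩ := htB
        have hne : t ≠ j := fun h => absurd (h ▸ htj) (lt_irrefl _)
        have hgap' := hgap t j hne
        have habs : |y t - y j| = y j - y t := by rw [abs_sub_comm]; exact abs_of_pos (by omega)
        rw [habs] at hgap'
        have hcard : rk y j = rk y t + 1 := by
          have hset : Finset.univ.filter (fun s => y s < y j)
              = insert t (Finset.univ.filter (fun s => y s < y t)) := by
            ext s
            simp only [mem_insert, mem_filter, mem_univ, true_and]
            constructor
            · intro hs
              rcases lt_trichotomy (y s) (y t) with h | h | h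
              · exact Or.inr h
              · exact Or.inl (y_inj hk hgap h)
              · exfalso
                have hsmem : s ∈ Finset.univ.filter (fun u => y i < y u ∧ y u < y j) := by
                  simp only [mem_filter, mem_univ, true_and]
                  exact ⟨lt_trans hit h, hs⟩
                have := htmax s hsmem
                omega
            · rintro (rfl | hs)
              · exact htj
              · exact lt_trans hs htj
          rw [rk, rk, hset, Finset.card_insert_of_notMem (by simp)]
        have hM' : rk y t ≤ M := by omega
        have hih := ih i t hit hM'
        rw [hcard]
        push_cast at hih ⊢
        nlinarith

lemma chain_min {k : ℤ} (hk : 0 ≤ k) {m : ℕ} {y : Fin m → ℤ}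
    (hgap : ∀ i j, i ≠ j → k < |y i - y j|) (hlow : ∀ i, k < y i) (i : Fin m) :
    k * (rk y i : ℤ) + (k + 1) ≤ y i := by
  rcases (Finset.univ.filter (fun t => y t < y i)).eq_empty_or_nonempty with hE | hNe
  · have : rk y i = 0 := by rw [rk, hE]; rfl
    rw [this]
    have := hlow i
    push_cast
    omega
  · obtain ⟨i₀, hi₀mem, hmin⟩ := Finset.exists_min_image _ y hNe
    simp only [mem_filter, mem_univ, true_and] at hi₀mem
    have hr0 : rk y i₀ = 0 := by
      rw [rk, Finset.card_eq_zero]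
      apply Finset.eq_empty_of_forall_notMem
      intro s hs
      simp only [mem_filter, mem_univ, true_and] at hs
      have hsmem : s ∈ Finset.univ.filter (fun t => y t < y i) := by
        simp only [mem_filter, mem_univ, true_and]
        exact lt_trans hs hi₀mem
      have := hmin s hsmem
      omega
    have hc := chain hk hgap (rk y i) i₀ i hi₀mem (le_refl _)
    rw [hr0] at hc
    have hl := hlow i₀
    have : (0:ℤ) ≤ (rk y i : ℤ) := Int.natCast_nonneg _
    push_cast at hc
    nlinarith

lemma chain_max {k : ℤ} (hk : 0 ≤ k) {m : ℕ} {y : Fin m → ℤ} {B : ℤ}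
    (hgap : ∀ i j, i ≠ j → k < |y i - y j|) (hhigh : ∀ i, y i < B) (i : Fin m) :
    y i + (k + 1) * ((m : ℤ) - 1 - (rk y i : ℤ)) ≤ B - 1 := by
  obtain ⟨i₁, _, hmax⟩ := Finset.exists_max_image Finset.univ y ⟨i, Finset.mem_univ i⟩
  have hr1 : rk y i₁ = m - 1 := by
    have hset : Finset.univ.filter (fun t => y t < y i₁) = Finset.univ.erase i₁ := by
      ext t
      simp only [mem_filter, mem_univ, true_and, mem_erase, and_true]
      constructor
      · intro ht h; rw [h] at ht; omega
      · intro ht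
        have h1 := hmax t (Finset.mem_univ t)
        rcases lt_or_eq_of_le h1 with h | h
        · exact h
        · exact absurd (y_inj hk hgap h) ht
    rw [rk, hset]
    simp [Finset.card_erase_of_mem]
  have hm1 : 1 ≤ m := by have := i.2; omega
  rcases lt_or_eq_of_le (hmax i (Finset.mem_univ i)) with hlt | heq
  · have hc := chain hk hgap (rk y i₁) i i₁ hlt (le_refl _)
    have hB := hhigh i₁
    rw [hr1] at hc
    have hcast : ((m - 1 : ℕ) : ℤ) = (m : ℤ) - 1 := by omega
    rw [hcast] at hc
    linarith
  · have hri : rk y i = m - 1 := by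
      rw [← hr1]
      unfold rk
      congr 1
      apply Finset.filter_congr
      intro t _
      rw [heq]
    rw [hri]
    have hB := hhigh i
    have hcast : ((m - 1 : ℕ) : ℤ) = (m : ℤ) - 1 := by omega
    rw [hcast]
    have : (k+1) * ((m:ℤ) - 1 - ((m:ℤ) - 1)) = 0 := by ring
    rw [this]
    omega


section CardY

variable {m : ℕ}

/-- The shift map -/
def dmap (k : ℕ) (y : Fin m → ℤ) (i : Fin m) : ℤ := y i - k * rk y i - (k + 1)

/-- property of tuples -/
def Pprop (k N : ℕ) (y : Fin m → ℤ) : Prop :=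
  (∀ i, (k : ℤ) < y i ∧ y i < (N : ℤ) - k) ∧ ∀ i j, i ≠ j → (k : ℤ) < |y i - y j|

/-- the inverse (stretch) map -/
def Gmap (k L : ℕ) (f : Fin m ↪ Fin L) (i : Fin m) : ℤ :=
  ((f i : ℕ) : ℤ) + k * rk (fun t => ((f t : ℕ) : ℤ)) i + (k + 1)

variable {k N L : ℕ}

lemma hd_nonneg (hy : Pprop k N y) (i : Fin m) : 0 ≤ dmap k y i := by
  obtain ⟨hrange, hgap⟩ := hy
  have := chain_min (Int.natCast_nonneg k) hgap (fun i => (hrange i).1) i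
  unfold dmap
  omega

lemma hd_lt (hL : (L : ℤ) = (N : ℤ) - ((m : ℤ) + 1) * (k : ℤ) - 1)
    {y : Fin m → ℤ} (hy : Pprop k N y) (i : Fin m) : dmap k y i < (L : ℤ) := by
  obtain ⟨hrange, hgap⟩ := hy
  have hmax := chain_max (Int.natCast_nonneg k) hgap (B := (N : ℤ) - k)
    (fun i => (hrange i).2) i
  have hrk : rk y i ≤ m - 1 := rk_le y i
  have hm1 : 1 ≤ m := by have := i.2; omega
  have hrkZ : (rk y i : ℤ) ≤ (m : ℤ) - 1 := by omega
  unfold dmap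
  nlinarith

lemma hd_mono {y : Fin m → ℤ} (hy : Pprop k N y) {i j : Fin m} (hij : y i < y j) :
    dmap k y i < dmap k y j := by
  have hc := chain (Int.natCast_nonneg k) hy.2 (rk y j) i j hij (le_refl _)
  have hr := rk_lt_rk (y_inj (Int.natCast_nonneg k) hy.2) hij
  have hrZ : (rk y i : ℤ) < (rk y j : ℤ) := by omega
  unfold dmap
  nlinarith

lemma hg_inj (f : Fin m ↪ Fin L) :
    Function.Injective (fun t => ((f t : ℕ) : ℤ)) := by
  intro a b hab
  have hab' : ((f a : ℕ) : ℤ) = ((f b : ℕ) : ℤ) := hab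
  exact f.injective (Fin.ext (by exact_mod_cast hab'))

lemma hG_gap (f : Fin m ↪ Fin L) {i j : Fin m}
    (hij : ((f i : ℕ) : ℤ) < ((f j : ℕ) : ℤ)) : Gmap k L f i + (k + 1) ≤ Gmap k L f j := by
  have hr := rk_lt_rk (hg_inj f) hij
  have hrZ : (rk (fun t => ((f t : ℕ) : ℤ)) i : ℤ) + 1 ≤ rk (fun t => ((f t : ℕ) : ℤ)) j := by
    omega
  have hkZ : (0 : ℤ) ≤ (k : ℤ) := Int.natCast_nonneg k
  unfold Gmap
  nlinarith

lemma hG_mono (f : Fin m ↪ Fin L) {i j : Fin m}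
    (hij : ((f i : ℕ) : ℤ) < ((f j : ℕ) : ℤ)) : Gmap k L f i < Gmap k L f j := by
  have := hG_gap (k := k) f hij
  have hkZ : (0 : ℤ) ≤ (k : ℤ) := Int.natCast_nonneg k
  omega

lemma hG_P (hL : (L : ℤ) = (N : ℤ) - ((m : ℤ) + 1) * (k : ℤ) - 1) (f : Fin m ↪ Fin L) :
    Pprop k N (Gmap k L f) := by
  have hkZ : (0 : ℤ) ≤ (k : ℤ) := Int.natCast_nonneg k
  constructor
  · intro i
    have h1 : (0 : ℤ) ≤ ((f i : ℕ) : ℤ) := Int.natCast_nonneg _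
    have h2 : ((f i : ℕ) : ℤ) < L := by exact_mod_cast (f i).2
    have h3 : (0 : ℤ) ≤ (rk (fun t => ((f t : ℕ) : ℤ)) i : ℤ) := Int.natCast_nonneg _
    have h4 : rk (fun t => ((f t : ℕ) : ℤ)) i ≤ m - 1 := rk_le _ i
    have hm1 : 1 ≤ m := by have := i.2; omega
    have h4Z : (rk (fun t => ((f t : ℕ) : ℤ)) i : ℤ) ≤ (m : ℤ) - 1 := by omega
    unfold Gmap
    constructor
    · nlinarith
    · nlinarith
  · intro i j hij
    have hne : ((f i : ℕ) : ℤ) ≠ ((f j : ℕ) : ℤ) := by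
      intro h; exact hij (hg_inj f h)
    rcases lt_or_gt_of_ne hne with h | h
    · have := hG_gap (k := k) f h
      rw [abs_sub_comm, abs_of_pos (by omega)]
      omega
    · have := hG_gap (k := k) f h
      rw [abs_of_pos (by omega)]
      omega

lemma card_Y (hN : (m + 1) * k < N) :
    Nat.card {y : Fin m → ℤ // Pprop k N y} = (N - (m + 1) * k - 1).descFactorial m := by
  set L : ℕ := N - (m + 1) * k - 1 with hLdef
  have hL : (L : ℤ) = (N : ℤ) - ((m : ℤ) + 1) * (k : ℤ) - 1 := by
    have h1 : ((m + 1) * k : ℕ) < N := hN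
    have h2 : ((((m + 1) * k : ℕ)) : ℤ) = ((m : ℤ) + 1) * (k : ℤ) := by push_cast; ring
    omega
  have hkZ : (0 : ℤ) ≤ (k : ℤ) := Int.natCast_nonneg k
  have key : Nat.card {y : Fin m → ℤ // Pprop k N y} = Nat.card (Fin m ↪ Fin L) := by
    apply Nat.card_congr
    refine
      { toFun := fun y => ⟨fun i => ⟨(dmap k y.1 i).toNat, ?_⟩, ?_⟩
        invFun := fun f => ⟨Gmap k L f, hG_P hL f⟩
        left_inv := ?_
        right_inv := ?_ }
    · have h1 := hd_nonneg y.2 i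
      have h2 := hd_lt hL y.2 i
      omega
    · intro a b hab
      simp only [Fin.mk.injEq] at hab
      by_contra hne
      have hya : y.1 a ≠ y.1 b := fun h => hne (y_inj hkZ y.2.2 h)
      have h1 := hd_nonneg y.2 a
      have h2 := hd_nonneg y.2 b
      rcases lt_or_gt_of_ne hya with h | h
      · have := hd_mono y.2 h; omega
      · have := hd_mono y.2 h; omega
    · rintro ⟨y, hy⟩
      apply Subtype.ext
      funext i
      have hval : ∀ t : Fin m, (((dmap k y t).toNat : ℕ) : ℤ) = dmap k y t := by
        intro t; exact Int.toNat_of_nonneg (hd_nonneg hy t)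
      show Gmap k L _ i = y i
      unfold Gmap
      have hrkeq : rk (fun t => (((dmap k y t).toNat : ℕ) : ℤ)) i = rk y i := by
        apply rk_congr (y_inj hkZ hy.2)
        intro a b hab
        rw [hval a, hval b]
        exact hd_mono hy hab
      simp only [Function.Embedding.coeFn_mk, Fin.val_mk]
      show (((dmap k y i).toNat : ℕ) : ℤ) + (k : ℤ) * ((rk (fun t => (((dmap k y t).toNat : ℕ) : ℤ)) i : ℕ) : ℤ) + ((k : ℤ) + 1) = y i
      rw [hrkeq, hval i]
      unfold dmap
      ring
    · intro f
      apply Function.Embedding.ext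
      intro i
      apply Fin.ext
      show (dmap k (Gmap k L f) i).toNat = (f i : ℕ)
      have hrkeq : rk (Gmap k L f) i = rk (fun t => ((f t : ℕ) : ℤ)) i := by
        apply rk_congr (hg_inj f)
        intro a b hab
        exact hG_mono f hab
      have hval : dmap k (Gmap k L f) i = ((f i : ℕ) : ℤ) := by
        unfold dmap
        rw [hrkeq]
        unfold Gmap
        ring
      rw [hval]
      exact Int.toNat_natCast _
  rw [key, Nat.card_eq_fintype_card, Fintype.card_embedding_eq, Fintype.card_fin,
    Fintype.card_fin]

end CardY

section ZModPart

lemma good_iff {k N : ℕ} (hkN : k < N) (d : ℤ) (hd1 : -(N : ℤ) < d) (hd2 : d < (N : ℤ)) :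
    (∀ m' : ℤ, -(k : ℤ) ≤ m' → m' ≤ (k : ℤ) → (d : ZMod N) ≠ (m' : ZMod N))
      ↔ ((k : ℤ) < |d| ∧ |d| < (N : ℤ) - k) := by
  have hkN' : (k : ℤ) < (N : ℤ) := by exact_mod_cast hkN
  constructor
  · intro h
    constructor
    · by_contra hle
      push_neg at hle
      have h1 : -(k : ℤ) ≤ d := by cases abs_cases d <;> omega
      have h2 : d ≤ (k : ℤ) := by cases abs_cases d <;> omega
      exact h d h1 h2 rfl
    · by_contra hge
      push_neg at hge
      rcases le_or_gt 0 d with h0 | h0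
      · rw [abs_of_nonneg h0] at hge
        refine h (d - N) (by omega) (by omega) ?_
        push_cast
        simp
      · rw [abs_of_neg h0] at hge
        refine h (d + N) (by omega) (by omega) ?_
        push_cast
        simp
  · rintro ⟨h1, h2⟩ m' hm1 hm2 heq
    have hz : ((d - m' : ℤ) : ZMod N) = 0 := by
      push_cast
      rw [heq]; ring
    rw [ZMod.intCast_zmod_eq_zero_iff_dvd] at hz
    obtain ⟨q, hq⟩ := hz
    have hN0 : (0 : ℤ) < (N : ℤ) := by omega
    have hub : d - m' < 2 * N := by omega
    have hlb : -(2 * (N : ℤ)) < d - m' := by omega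
    have hq2 : q < 2 := by nlinarith
    have hq1 : -2 < q := by nlinarith
    rcases abs_cases d with ⟨ha, _⟩ | ⟨ha, _⟩ <;>
      (rw [ha] at h1 h2; interval_cases q <;> omega)

lemma char {k N m : ℕ} [NeZero N] (hkN : k < N)
    (c : Fin (m + 1) → ZMod N) (hc0 : c 0 = 0) :
    (∀ i j : Fin (m + 1), i ≠ j → ∀ m' : ℤ, -(k : ℤ) ≤ m' → m' ≤ (k : ℤ) →
        c i - c j ≠ (m' : ZMod N))
      ↔ Pprop k N (fun i : Fin m => ((c i.succ).val : ℤ)) := by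
  have hvlt : ∀ a : Fin (m + 1), ((c a).val : ℤ) < N := by
    intro a; exact_mod_cast ZMod.val_lt (c a)
  have hvnn : ∀ a : Fin (m + 1), (0 : ℤ) ≤ ((c a).val : ℤ) := fun a => Int.natCast_nonneg _
  have hback : ∀ a : Fin (m + 1), (((c a).val : ℤ) : ZMod N) = c a := by
    intro a
    rw [Int.cast_natCast]
    exact ZMod.natCast_rightInverse (c a)
  have hsub : ∀ a b : Fin (m + 1),
      c a - c b = ((((c a).val : ℤ) - ((c b).val : ℤ) : ℤ) : ZMod N) := by
    intro a b
    rw [Int.cast_sub, hback, hback]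
  have hval0 : ((c 0).val : ℤ) = 0 := by rw [hc0, ZMod.val_zero]; rfl
  constructor
  · intro h
    constructor
    · intro i
      have hi := h i.succ 0 (Fin.succ_ne_zero i)
      have hgood := (good_iff hkN (((c i.succ).val : ℤ) - ((c 0).val : ℤ))
        (by have := hvlt i.succ; have := hvnn i.succ; have := hvlt 0; have := hvnn 0; omega)
        (by have := hvlt i.succ; have := hvnn i.succ; have := hvlt 0; have := hvnn 0; omega)).mp
        (fun m' h1 h2 => by rw [← hsub]; exact hi m' h1 h2)
      rw [hval0, sub_zero, abs_of_nonneg (hvnn i.succ)] at hgood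
      exact hgood
    · intro i j hij
      have hne : i.succ ≠ j.succ := fun hs => hij (Fin.succ_injective _ hs)
      have hgood := (good_iff hkN (((c i.succ).val : ℤ) - ((c j.succ).val : ℤ))
        (by have := hvlt i.succ; have := hvnn i.succ; have := hvlt j.succ; have := hvnn j.succ; omega)
        (by have := hvlt i.succ; have := hvnn i.succ; have := hvlt j.succ; have := hvnn j.succ; omega)).mp
        (fun m' h1 h2 => by rw [← hsub]; exact h i.succ j.succ hne m' h1 h2)
      exact hgood.1
  · rintro ⟨hr, hg⟩ i j hij m' hm1 hm2
    replace hr : ∀ i : Fin m, (k : ℤ) < ((c i.succ).val : ℤ) ∧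
        ((c i.succ).val : ℤ) < (N : ℤ) - k := hr
    replace hg : ∀ i j : Fin m, i ≠ j →
        (k : ℤ) < |((c i.succ).val : ℤ) - ((c j.succ).val : ℤ)| := hg
    rw [hsub i j]
    have hbd : ∀ a b : Fin (m + 1),
        -(N : ℤ) < ((c a).val : ℤ) - ((c b).val : ℤ) ∧
          ((c a).val : ℤ) - ((c b).val : ℤ) < N := by
      intro a b
      have := hvlt a; have := hvnn a; have := hvlt b; have := hvnn b
      omega
    refine (good_iff hkN _ (hbd i j).1 (hbd i j).2).mpr ⟨?_, ?_⟩ m' hm1 hm2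
    · -- k < |d|
      rcases Fin.eq_zero_or_eq_succ i with rfl | ⟨i', rfl⟩
      · rcases Fin.eq_zero_or_eq_succ j with rfl | ⟨j', rfl⟩
        · exact absurd rfl hij
        · have := (hr j').1
          rw [hval0, zero_sub, abs_neg, abs_of_nonneg (hvnn j'.succ)]
          exact this
      · rcases Fin.eq_zero_or_eq_succ j with rfl | ⟨j', rfl⟩
        · have := (hr i').1
          rw [hval0, sub_zero, abs_of_nonneg (hvnn i'.succ)]
          exact this
        · have hij' : i' ≠ j' := fun hh => hij (by rw [hh])
          exact hg i' j' hij'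
    · -- |d| < N - k
      rcases Fin.eq_zero_or_eq_succ i with rfl | ⟨i', rfl⟩
      · rcases Fin.eq_zero_or_eq_succ j with rfl | ⟨j', rfl⟩
        · exact absurd rfl hij
        · have h1 := (hr j').1
          have h2 := (hr j').2
          rw [hval0, zero_sub, abs_neg, abs_of_nonneg (hvnn j'.succ)]
          exact h2
      · rcases Fin.eq_zero_or_eq_succ j with rfl | ⟨j', rfl⟩
        · have h2 := (hr i').2
          rw [hval0, sub_zero, abs_of_nonneg (hvnn i'.succ)]
          exact h2
        · have ha := hr i'
          have hb := hr j'
          rw [abs_sub_lt_iff]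
          omega

end ZModPart

end Stmt14

open Stmt14

/-- For positive integers k, n and N > nk, the number of zero-free proper
colorings c : {1,…,n} → ℤ_N of the gain graph [−k,k]K_n — i.e. colorings such that for
all i ≠ j the difference c(i) − c(j) is not congruent mod N to any element of
{−k,…,−1,0,1,…,k} — equals N·(N−nk−1)_{n−1} = N·(N−nk−1)(N−nk−2)⋯(N−nk−n+1). -/
theorem stmt_14 (k n N : ℕ) (hk : 0 < k) (hn : 0 < n) (hN : n * k < N) :
    (Nat.card {c : Fin n → ZMod N //
        ∀ i j : Fin n, i ≠ j → ∀ m : ℤ, -(k : ℤ) ≤ m → m ≤ (k : ℤ) →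
          c i - c j ≠ (m : ZMod N)} : ℤ)
      = (N : ℤ) * ∏ r ∈ Finset.range (n - 1), ((N : ℤ) - n * k - (r + 1)) := by
  obtain ⟨m, rfl⟩ : ∃ m, n = m + 1 := ⟨n - 1, by omega⟩
  haveI : NeZero N := ⟨by omega⟩
  have hkN : k < N := by
    have : k ≤ (m + 1) * k := Nat.le_mul_of_pos_left k (by omega)
    omega
  have hk0 : (0 : ℤ) ≤ (k : ℤ) := Int.natCast_nonneg k
  have e1 : {c : Fin (m + 1) → ZMod N //
        ∀ i j : Fin (m + 1), i ≠ j → ∀ m' : ℤ, -(k : ℤ) ≤ m' → m' ≤ (k : ℤ) →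
          c i - c j ≠ (m' : ZMod N)}
      ≃ (ZMod N) × {c : Fin (m + 1) → ZMod N //
        (∀ i j : Fin (m + 1), i ≠ j → ∀ m' : ℤ, -(k : ℤ) ≤ m' → m' ≤ (k : ℤ) →
          c i - c j ≠ (m' : ZMod N)) ∧ c 0 = 0} :=
    { toFun := fun c => (c.1 0, ⟨fun i => c.1 i - c.1 0,
        ⟨fun i j hij m' h1 h2 => by
          simpa only [sub_sub_sub_cancel_right] using c.2 i j hij m' h1 h2,
         sub_self _⟩⟩)
      invFun := fun p => ⟨fun i => p.2.1 i + p.1, fun i j hij m' h1 h2 => by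
        simpa only [add_sub_add_right_eq_sub] using p.2.2.1 i j hij m' h1 h2⟩
      left_inv := fun c => by
        apply Subtype.ext; funext i; simp
      right_inv := fun p => by
        obtain ⟨a, c, hc, hc0⟩ := p
        refine Prod.ext ?_ (Subtype.ext (funext fun i => ?_)) <;> simp [hc0] }
  have hvy : ∀ (y : Fin m → ℤ), Pprop k N y → ∀ i : Fin m,
      ((((Fin.cases (0 : ZMod N) (fun t => (((y t).toNat : ℕ) : ZMod N)) : Fin (m+1) → ZMod N)
        i.succ).val : ℤ)) = y i := by
    intro y hy i
    simp only [Fin.cases_succ]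
    have h1 : 0 ≤ y i := by have := (hy.1 i).1; omega
    have h2 : y i < (N : ℤ) := by have := (hy.1 i).2; omega
    rw [ZMod.val_natCast, Nat.mod_eq_of_lt (by omega)]
    omega
  have e2 : {c : Fin (m + 1) → ZMod N //
        (∀ i j : Fin (m + 1), i ≠ j → ∀ m' : ℤ, -(k : ℤ) ≤ m' → m' ≤ (k : ℤ) →
          c i - c j ≠ (m' : ZMod N)) ∧ c 0 = 0}
      ≃ {y : Fin m → ℤ // Pprop k N y} :=
    { toFun := fun c => ⟨fun i => ((c.1 i.succ).val : ℤ), (char hkN c.1 c.2.2).mp c.2.1⟩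
      invFun := fun y =>
        ⟨(Fin.cases (0 : ZMod N) (fun t => (((y.1 t).toNat : ℕ) : ZMod N)) : Fin (m+1) → ZMod N),
          ⟨(char hkN _ (by simp)).mpr (by
              have heq : (fun i : Fin m =>
                  (((Fin.cases (0 : ZMod N) (fun t => (((y.1 t).toNat : ℕ) : ZMod N))
                    : Fin (m+1) → ZMod N) i.succ).val : ℤ)) = y.1 :=
                funext (hvy y.1 y.2)
              rw [heq]
              exact y.2),
            by simp⟩⟩
      left_inv := fun c => by
        apply Subtype.ext
        funext i
        induction i using Fin.cases with
        | zero => simpa using c.2.2.symm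
        | succ i =>
            simp only [Fin.cases_succ, Int.toNat_natCast]
            exact ZMod.natCast_rightInverse (c.1 i.succ)
      right_inv := fun y => Subtype.ext (funext fun i => hvy y.1 y.2 i) }
  rw [Nat.card_congr (e1.trans (Equiv.prodCongr (Equiv.refl (ZMod N)) e2)), Nat.card_prod,
    Nat.card_zmod, card_Y hN]
  set L : ℕ := N - (m + 1) * k - 1 with hLdef
  have hc : (((m + 1) * k : ℕ) : ℤ) = ((m + 1 : ℕ) : ℤ) * (k : ℤ) := by push_cast; ring
  have hLZ : (L : ℤ) = (N : ℤ) - ((m + 1 : ℕ) : ℤ) * (k : ℤ) - 1 := by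
    rw [← hc]
    have : ((m + 1) * k : ℕ) < N := hN
    omega
  rw [Nat.cast_mul, Nat.descFactorial_eq_prod_range, Nat.cast_prod]
  have hrange : (m + 1) - 1 = m := by omega
  rw [hrange]
  congr 1
  by_cases hcase : m ≤ L
  · apply Finset.prod_congr rfl
    intro r hr
    rw [Finset.mem_range] at hr
    have h1 : ((L - r : ℕ) : ℤ) = (L : ℤ) - r := by omega
    rw [h1, hLZ]
    ring
  · have hLm : L ∈ Finset.range m := by rw [Finset.mem_range]; omega
    rw [Finset.prod_eq_zero hLm (by simp), Finset.prod_eq_zero hLm (by push_cast at hLZ ⊢; linarith)]
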